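/- Let L be a complete lattice with order ≤ and bottom 0. Then ⟨L, ≤, ∨, 0⟩ is a dually integral Abelian pomonoid, and every Galatos–Tsinakis consequence relation on L is a deductive relation on ⟨L, ≤, ∨, 0⟩. In particular, compatibility holds: if a ⊢ b then a ∨ c ⊢ b ∨ c. -/
import Mathlib

/-- A complete lattice `⟨L, ≤, ∨, ⊥⟩` is a dually integral Abelian pomonoid and every
Galatos–Tsinakis consequence relation on `L` is a deductive relation on it; in
particular compatibility holds: `a ⊢ b → a ∨ c ⊢ b ∨ c`. -/
theorem gtcr_is_deductive_relation {L : Type*} [CompleteLattice L]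
    (vd : L → L → Prop)
    (hrefl : ∀ x : L, vd x x)
    (htrans : ∀ x y z : L, vd x y → vd y z → vd x z)
    (hge : ∀ x y : L, y ≤ x → vd x y)
    (hsup : ∀ x : L, vd x (sSup {y : L | vd x y})) :
    -- ⟨L, ≤, ∨, ⊥⟩ is a dually integral Abelian pomonoid
    ((∀ a b c : L, (a ⊔ b) ⊔ c = a ⊔ (b ⊔ c)) ∧
     (∀ a b : L, a ⊔ b = b ⊔ a) ∧
     (∀ a : L, a ⊔ ⊥ = a) ∧
     (∀ a b c : L, a ≤ b → a ⊔ c ≤ b ⊔ c) ∧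
     (∀ a : L, ⊥ ≤ a)) ∧
    -- vd is a deductive relation on ⟨L, ≤, ∨, ⊥⟩
    (∀ a b : L, a ≤ b → vd b a) ∧
    (∀ a b c : L, vd a b → vd b c → vd a c) ∧
    (∀ a b c : L, vd a b → vd (a ⊔ c) (b ⊔ c)) := by
  refine ⟨⟨fun a b c => sup_assoc a b c, fun a b => sup_comm a b, fun a => sup_bot_eq a,
    fun a b c h => sup_le_sup_right h c, fun a => bot_le⟩,
    fun a b h => hge b a h, htrans, fun a b c h => ?_⟩
  have hb : vd (a ⊔ c) b := htrans _ _ _ (hge _ _ le_sup_left) h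
  have hc : vd (a ⊔ c) c := hge _ _ le_sup_right
  exact htrans _ _ _ (hsup (a ⊔ c)) (hge _ _ (sup_le (le_sSup hb) (le_sSup hc)))
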